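/- Let N ≥ 1 and let p_1,…,p_N, x_1,…,x_N : ℝ → ℝ be functions, each differentiable at a point t, with p_i(t) > 0 for all i. Suppose there exists ε > 0 such that for every δ ∈ (0, ε) and every i = 1,…,N the following two equations hold: p_i(t+δ) + Σ_{j=1}^{i−1} δ p_j(t+δ) p_i(t+δ) e^{x_i(t+δ) − x_j(t+δ)}/(1 + δ p_j(t+δ)) = p_i(t) + Σ_{j=i+1}^{N} δ p_i(t) p_j(t) e^{x_j(t) − x_i(t)}/(1 + δ p_i(t)), and e^{x_i(t+δ) − x_i(t)} = (p_i(t)/p_i(t+δ))·(1 + δ Σ_{j=i}^{N} p_j(t) e^{x_j(t) − x_i(t)})²/(1 + δ p_i(t)). Then the Camassa–Holm peakon equations hold at t: p_i'(t) = −p_i(t) Σ_{j=1}^{i−1} p_j(t) e^{x_i(t) − x_j(t)} + p_i(t) Σ_{j=i+1}^{N} p_j(t) e^{x_j(t) − x_i(t)} and x_i'(t) = Σ_{j=1}^{i−1} p_j(t) e^{x_i(t) − x_j(t)} + p_i(t) + Σ_{j=i+1}^{N} p_j(t) e^{x_j(t) − x_i(t)} for i = 1,…,N. -/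

import Mathlib

open Finset Filter Topology

private lemma divdiv {δ : ℝ} (hδ : δ ≠ 0) (a b c d : ℝ) :
    δ * a * b * c / d / δ = a * b * c / d := by
  rw [div_div, mul_comm d δ, ← div_div,
    show δ * a * b * c = δ * (a * b * c) by ring, mul_div_cancel_left₀ _ hδ]

theorem stmt14 (N : ℕ) (hN : 1 ≤ N) (p x : Fin N → ℝ → ℝ) (t : ℝ)
    (hpd : ∀ i, DifferentiableAt ℝ (p i) t)
    (hxd : ∀ i, DifferentiableAt ℝ (x i) t)
    (hpos : ∀ i, 0 < p i t)
    (hdisc : ∃ ε : ℝ, 0 < ε ∧ ∀ δ : ℝ, 0 < δ → δ < ε → ∀ i : Fin N,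
      (p i (t + δ) + ∑ j ∈ Finset.univ.filter (fun j => j < i),
          δ * p j (t + δ) * p i (t + δ) *
            Real.exp (x i (t + δ) - x j (t + δ)) / (1 + δ * p j (t + δ))
        = p i t + ∑ j ∈ Finset.univ.filter (fun j => i < j),
          δ * p i t * p j t * Real.exp (x j t - x i t) / (1 + δ * p i t)) ∧
      (Real.exp (x i (t + δ) - x i t)
        = p i t / p i (t + δ) *
          (1 + δ * ∑ j ∈ Finset.univ.filter (fun j => i ≤ j),
            p j t * Real.exp (x j t - x i t)) ^ 2 / (1 + δ * p i t))) :
    ∀ i : Fin N,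
      (deriv (p i) t =
        -(p i t) * ∑ j ∈ Finset.univ.filter (fun j => j < i),
            p j t * Real.exp (x i t - x j t)
          + p i t * ∑ j ∈ Finset.univ.filter (fun j => i < j),
            p j t * Real.exp (x j t - x i t)) ∧
      (deriv (x i) t =
        (∑ j ∈ Finset.univ.filter (fun j => j < i), p j t * Real.exp (x i t - x j t))
          + p i t
          + ∑ j ∈ Finset.univ.filter (fun j => i < j), p j t * Real.exp (x j t - x i t)) := by
  obtain ⟨ε, hε, hev⟩ := hdisc
  intro i
  set A := ∑ j ∈ Finset.univ.filter (fun j => j < i), p j t * Real.exp (x i t - x j t) with hA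
  set B := ∑ j ∈ Finset.univ.filter (fun j => i < j), p j t * Real.exp (x j t - x i t) with hB
  have hsh : ContinuousAt (fun δ : ℝ => t + δ) 0 := by fun_prop
  have cp : ∀ j : Fin N, ContinuousAt (fun δ : ℝ => p j (t + δ)) 0 := fun j =>
    (show ContinuousAt (p j) (t + 0) by rw [add_zero]; exact (hpd j).continuousAt).comp hsh
  have cx : ∀ j : Fin N, ContinuousAt (fun δ : ℝ => x j (t + δ)) 0 := fun j =>
    (show ContinuousAt (x j) (t + 0) by rw [add_zero]; exact (hxd j).continuousAt).comp hsh
  have hshift : Tendsto (fun δ : ℝ => t + δ) (𝓝[>] (0:ℝ)) (𝓝[≠] t) := by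
    apply tendsto_nhdsWithin_of_tendsto_nhds_of_eventually_within
    · have h1 : Tendsto (fun δ : ℝ => t + δ) (𝓝 (0:ℝ)) (𝓝 (t + 0)) := hsh
      rw [add_zero] at h1
      exact h1.mono_left nhdsWithin_le_nhds
    · filter_upwards [self_mem_nhdsWithin] with δ hδ
      exact ne_of_gt (lt_add_of_pos_right t hδ)
  have hmem : ∀ᶠ δ : ℝ in 𝓝[>] (0:ℝ), 0 < δ ∧ δ < ε := by
    filter_upwards [Ioo_mem_nhdsGT_of_mem (Set.mem_Ico.2 ⟨le_refl 0, hε⟩)] with δ hδ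
    exact ⟨hδ.1, hδ.2⟩
  have hslope : ∀ f : ℝ → ℝ, DifferentiableAt ℝ f t →
      Tendsto (fun δ : ℝ => (f (t + δ) - f t) / δ) (𝓝[>] (0:ℝ)) (𝓝 (deriv f t)) := by
    intro f hf
    have := (hasDerivAt_iff_tendsto_slope.mp hf.hasDerivAt).comp hshift
    refine this.congr fun δ => ?_
    simp [slope_def_field]
  -- ============ Step 1 ============
  set F : ℝ → ℝ := fun δ =>
    (∑ j ∈ Finset.univ.filter (fun j => i < j),
      p i t * p j t * Real.exp (x j t - x i t) / (1 + δ * p i t)) -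
    ∑ j ∈ Finset.univ.filter (fun j => j < i),
      p j (t + δ) * p i (t + δ) * Real.exp (x i (t + δ) - x j (t + δ)) / (1 + δ * p j (t + δ))
    with hF
  have hFcont : ContinuousAt F 0 := by
    apply ContinuousAt.sub
    · exact tendsto_finset_sum _ fun j _ =>
        continuousAt_const.div
          (continuousAt_const.add (continuousAt_id.mul continuousAt_const)) (by simp)
    · exact tendsto_finset_sum _ fun j _ =>
        ((((cp j).mul (cp i)).mul
          (Real.continuous_exp.continuousAt.comp ((cx i).sub (cx j)))).div
          (continuousAt_const.add (continuousAt_id.mul (cp j))) (by simp))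
  have hF0 : F 0 = -(p i t) * A + p i t * B := by
    simp only [hF, add_zero, zero_mul, div_one, hA, hB, Finset.mul_sum]
    rw [sub_eq_neg_add]
    congr 1
    · rw [← Finset.sum_neg_distrib]
      exact Finset.sum_congr rfl fun j _ => by ring
    · exact Finset.sum_congr rfl fun j _ => by ring
  have heq1 : ∀ᶠ δ : ℝ in 𝓝[>] (0:ℝ), (p i (t + δ) - p i t) / δ = F δ := by
    filter_upwards [hmem] with δ ⟨hδ0, hδε⟩
    have h1 := (hev δ hδ0 hδε i).1
    have hδ := ne_of_gt hδ0
    have : p i (t + δ) - p i t =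
        (∑ j ∈ Finset.univ.filter (fun j => i < j),
          δ * p i t * p j t * Real.exp (x j t - x i t) / (1 + δ * p i t)) -
        ∑ j ∈ Finset.univ.filter (fun j => j < i),
          δ * p j (t + δ) * p i (t + δ) *
            Real.exp (x i (t + δ) - x j (t + δ)) / (1 + δ * p j (t + δ)) := by
      linarith [h1]
    rw [this, hF, sub_div, Finset.sum_div, Finset.sum_div]
    congr 1
    · exact Finset.sum_congr rfl fun j _ => divdiv hδ _ _ _ _
    · exact Finset.sum_congr rfl fun j _ => divdiv hδ _ _ _ _
  have hderivp : deriv (p i) t = -(p i t) * A + p i t * B := by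
    refine tendsto_nhds_unique (hslope (p i) (hpd i)) ?_
    rw [← hF0]
    exact (hFcont.mono_left nhdsWithin_le_nhds).congr' (heq1.mono fun δ h => h.symm)
  refine ⟨hderivp, ?_⟩
  -- ============ Step 2 ============
  set S := ∑ j ∈ Finset.univ.filter (fun j => i ≤ j), p j t * Real.exp (x j t - x i t) with hS
  have hSB : S = p i t + B := by
    rw [hS, hB, show Finset.univ.filter (fun j => i ≤ j)
        = insert i (Finset.univ.filter (fun j => i < j)) by
      ext j; simp [le_iff_lt_or_eq, or_comm, eq_comm]]
    rw [Finset.sum_insert (by simp)]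
    simp
  set g : ℝ → ℝ := fun δ =>
    Real.log (p i t) - Real.log (p i (t + δ)) + 2 * Real.log (1 + δ * S)
      - Real.log (1 + δ * p i t) with hg
  -- derivative of g at 0
  have hshd : HasDerivAt (fun δ : ℝ => t + δ) 1 0 := by
    simpa using (hasDerivAt_id (0:ℝ)).const_add t
  have hpin : HasDerivAt (fun δ : ℝ => p i (t + δ)) (deriv (p i) t) 0 := by
    have h0 : HasDerivAt (p i) (deriv (p i) t) (t + 0) := by
      rw [add_zero]; exact (hpd i).hasDerivAt
    have h := h0.comp 0 hshd
    rw [mul_one] at h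
    exact h
  have hpisne : p i (t + 0) ≠ 0 := by rw [add_zero]; exact ne_of_gt (hpos i)
  have hg1 : HasDerivAt (fun δ : ℝ => Real.log (p i (t + δ)))
      (deriv (p i) t / p i t) 0 := by
    have := hpin.log hpisne
    simpa using this
  have hg2 : HasDerivAt (fun δ : ℝ => Real.log (1 + δ * S)) S 0 := by
    have h1 : HasDerivAt (fun δ : ℝ => 1 + δ * S) S 0 := by
      simpa using ((hasDerivAt_id (0:ℝ)).mul_const S).const_add 1
    simpa using h1.log (by simp)
  have hg3 : HasDerivAt (fun δ : ℝ => Real.log (1 + δ * p i t)) (p i t) 0 := by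
    have h1 : HasDerivAt (fun δ : ℝ => 1 + δ * p i t) (p i t) 0 := by
      simpa using ((hasDerivAt_id (0:ℝ)).mul_const (p i t)).const_add 1
    simpa using h1.log (by simp)
  have hgd : HasDerivAt g (-(deriv (p i) t / p i t) + 2 * S - p i t) 0 := by
    have := (((hasDerivAt_const (0:ℝ) (Real.log (p i t))).sub hg1).add
      (hg2.const_mul 2)).sub hg3
    simp at this
    exact this
  have hg0 : g 0 = 0 := by simp [hg]
  have hgt : Tendsto (fun δ : ℝ => g δ / δ) (𝓝[>] (0:ℝ))
      (𝓝 (-(deriv (p i) t / p i t) + 2 * S - p i t)) := by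
    have := (hasDerivAt_iff_tendsto_slope.mp hgd).mono_left
      (nhdsWithin_mono 0 (fun δ (hδ : δ ∈ Set.Ioi (0:ℝ)) => ne_of_gt hδ))
    refine this.congr fun δ => ?_
    simp [slope_def_field, hg0]
  -- eventually p i (t+δ) > 0
  have hppos : ∀ᶠ δ : ℝ in 𝓝[>] (0:ℝ), 0 < p i (t + δ) := by
    have h0 : (0:ℝ) < p i (t + 0) := by rw [add_zero]; exact hpos i
    exact ((cp i).eventually (eventually_gt_nhds h0)).filter_mono nhdsWithin_le_nhds
  have hSpos : 0 < S := by
    rw [hSB]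
    have hBnn : 0 ≤ B := Finset.sum_nonneg fun j _ =>
      mul_nonneg (le_of_lt (hpos j)) (Real.exp_pos _).le
    linarith [hpos i]
  have heq2 : ∀ᶠ δ : ℝ in 𝓝[>] (0:ℝ), (x i (t + δ) - x i t) / δ = g δ / δ := by
    filter_upwards [hmem, hppos] with δ ⟨hδ0, hδε⟩ hp
    have h2 := (hev δ hδ0 hδε i).2
    have hd1 : (0:ℝ) < 1 + δ * S := by positivity
    have hd2 : (0:ℝ) < 1 + δ * p i t := by
      have := hpos i; positivity
    have hnum : x i (t + δ) - x i t = g δ := by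
      have := congrArg Real.log h2
      rw [Real.log_exp] at this
      rw [this, hg]
      rw [Real.log_div (ne_of_gt (mul_pos (div_pos (hpos i) hp) (pow_pos hd1 2))) (ne_of_gt hd2),
        Real.log_mul (ne_of_gt (div_pos (hpos i) hp)) (pow_ne_zero _ (ne_of_gt hd1)),
        Real.log_div (ne_of_gt (hpos i)) (ne_of_gt hp),
        Real.log_pow]
      push_cast
      ring
    rw [hnum]
  have hxderiv : deriv (x i) t = -(deriv (p i) t / p i t) + 2 * S - p i t :=
    tendsto_nhds_unique (hslope (x i) (hxd i)) (hgt.congr' (heq2.mono fun δ h => h.symm))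
  rw [hxderiv, hderivp, hSB]
  have hpne := ne_of_gt (hpos i)
  field_simp
  ring
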